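/- arXiv:2409.17997 — 3 statements merged into one kernel-verified Lean document; each statement's English description precedes it below -/
import Mathlib

section
/- Let P₁ and P₂ be n×n real symmetric positive definite matrices, let ω ∈ [0,1], and set P_Γ = ω·P₁ + (1 − ω)·P₂. Then the pairwise inverse-covariance-intersection information matrix satisfies (P₁)⁻¹ + (P₂)⁻¹ − (P_Γ)⁻¹ ⪰ (1 − ω)·(P₁)⁻¹ + ω·(P₂)⁻¹; in particular, (P₁)⁻¹ + (P₂)⁻¹ − (P_Γ)⁻¹ is symmetric positive definite, so the pairwise ICI fused covariance ((P₁)⁻¹ + (P₂)⁻¹ − (P_Γ)⁻¹)⁻¹ is well defined and positive definite. -/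
section helpers
variable {n : ℕ}

lemma herm_smul {A : Matrix (Fin n) (Fin n) ℝ} (hA : A.IsHermitian) (a : ℝ) :
    (a • A).IsHermitian := by
  rw [Matrix.IsHermitian, Matrix.conjTranspose_smul, star_trivial, hA.eq]

lemma psd_smul {A : Matrix (Fin n) (Fin n) ℝ} (hA : A.PosSemidef) {a : ℝ} (ha : 0 ≤ a) :
    (a • A).PosSemidef := by
  rw [Matrix.posSemidef_iff_dotProduct_mulVec] at hA ⊢
  refine ⟨herm_smul hA.1 a, fun x => ?_⟩
  have := hA.2 x
  simp only [Matrix.smul_mulVec, dotProduct_smul, smul_eq_mul]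
  positivity

lemma convex_posDef {A B : Matrix (Fin n) (Fin n) ℝ} (hA : A.PosDef) (hB : B.PosDef)
    {a b : ℝ} (ha : 0 ≤ a) (hb : 0 ≤ b) (hab : a + b = 1) : (a • A + b • B).PosDef := by
  rw [Matrix.posDef_iff_dotProduct_mulVec] at hA hB ⊢
  refine ⟨(herm_smul hA.1 a).add (herm_smul hB.1 b), fun x hx => ?_⟩
  have qA := hA.2 hx; have qB := hB.2 hx
  simp only [Matrix.add_mulVec, Matrix.smul_mulVec, dotProduct_add,
    dotProduct_smul, smul_eq_mul]
  rcases ha.lt_or_eq with h | h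
  · nlinarith
  · nlinarith

end helpers

/-- Loewner order on real matrices: `M ⪯ N` iff `N - M` is positive semidefinite. -/
def Matrix.Loewner {n : ℕ} (M N : Matrix (Fin n) (Fin n) ℝ) : Prop :=
  (N - M).PosSemidef

/-- **Pairwise ICI information bound.** For symmetric positive definite `P₁, P₂`,
`ω ∈ [0,1]` and `P_Γ = ω P₁ + (1−ω) P₂`, the ICI information matrix satisfies
`(P₁)⁻¹ + (P₂)⁻¹ − (P_Γ)⁻¹ ⪰ (1−ω)(P₁)⁻¹ + ω(P₂)⁻¹`; in particular it is symmetric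
positive definite, so the fused covariance is well defined and positive definite. -/
theorem pairwise_ici_posDef
    {n : ℕ} (P₁ P₂ : Matrix (Fin n) (Fin n) ℝ)
    (hP₁ : P₁.PosDef) (hP₂ : P₂.PosDef)
    (ω : ℝ) (hω0 : 0 ≤ ω) (hω1 : ω ≤ 1)
    (PΓ : Matrix (Fin n) (Fin n) ℝ) (hPΓ : PΓ = ω • P₁ + (1 - ω) • P₂) :
    Matrix.Loewner ((1 - ω) • P₁⁻¹ + ω • P₂⁻¹) (P₁⁻¹ + P₂⁻¹ - PΓ⁻¹) ∧
    (P₁⁻¹ + P₂⁻¹ - PΓ⁻¹).PosDef ∧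
    ((P₁⁻¹ + P₂⁻¹ - PΓ⁻¹)⁻¹).PosDef := by
  have hω0' : (0:ℝ) ≤ 1 - ω := by linarith
  have hA := hP₁.inv
  have hB := hP₂.inv
  set D : Matrix (Fin n) (Fin n) ℝ := P₁⁻¹ - P₂⁻¹ with hD
  set C : Matrix (Fin n) (Fin n) ℝ := (1 - ω) • P₁⁻¹ + ω • P₂⁻¹ with hC
  have hCpd : C.PosDef := convex_posDef hA hB hω0' hω0 (by ring)
  -- basic inverse facts
  have e1 : P₁ * P₁⁻¹ = 1 := Matrix.mul_nonsing_inv _ (isUnit_iff_ne_zero.mpr hP₁.det_pos.ne')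
  have e2 : P₂ * P₂⁻¹ = 1 := Matrix.mul_nonsing_inv _ (isUnit_iff_ne_zero.mpr hP₂.det_pos.ne')
  have eC : C * C⁻¹ = 1 := Matrix.mul_nonsing_inv _ (isUnit_iff_ne_zero.mpr hCpd.det_pos.ne')
  -- key: PΓ * D = (P₂ - P₁) * C
  have key : PΓ * D = (P₂ - P₁) * C := by
    rw [hPΓ, hD, hC]
    simp only [Matrix.add_mul, Matrix.sub_mul, Matrix.mul_sub, Matrix.mul_add,
      Matrix.smul_mul, Matrix.mul_smul, e1, e2]
    module
  have hPD : PΓ * (D * C⁻¹ * D) = (P₂ - P₁) * D := by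
    calc PΓ * (D * C⁻¹ * D) = ((PΓ * D) * C⁻¹) * D := by
          simp only [Matrix.mul_assoc]
      _ = (P₂ - P₁) * (C * C⁻¹) * D := by rw [key, Matrix.mul_assoc (P₂ - P₁)]
      _ = (P₂ - P₁) * D := by rw [eC, Matrix.mul_one]
  have hmain : PΓ * (ω • P₁⁻¹ + (1 - ω) • P₂⁻¹ - (ω * (1 - ω)) • (D * C⁻¹ * D)) = 1 := by
    rw [Matrix.mul_sub, Matrix.mul_smul, hPD]
    rw [hPΓ, hD]
    simp only [Matrix.add_mul, Matrix.sub_mul, Matrix.mul_sub, Matrix.mul_add,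
      Matrix.smul_mul, Matrix.mul_smul, e1, e2]
    module
  have hinv : PΓ⁻¹ = ω • P₁⁻¹ + (1 - ω) • P₂⁻¹ - (ω * (1 - ω)) • (D * C⁻¹ * D) :=
    Matrix.inv_eq_right_inv hmain
  -- PSD congruence term
  have hDsym : D.conjTranspose = D := ((hA.1).sub (hB.1)).eq
  have hpsd : (D * C⁻¹ * D).PosSemidef := by
    have := (hCpd.inv.posSemidef).mul_mul_conjTranspose_same D
    rwa [hDsym] at this
  have hterm : ((ω * (1 - ω)) • (D * C⁻¹ * D)).PosSemidef :=
    psd_smul hpsd (by positivity)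
  have hdiff : (P₁⁻¹ + P₂⁻¹ - PΓ⁻¹) - ((1 - ω) • P₁⁻¹ + ω • P₂⁻¹)
      = (ω * (1 - ω)) • (D * C⁻¹ * D) := by
    rw [hinv]; module
  have hdiff' : P₁⁻¹ + P₂⁻¹ - PΓ⁻¹
      = ((1 - ω) • P₁⁻¹ + ω • P₂⁻¹) + (ω * (1 - ω)) • (D * C⁻¹ * D) := by
    rw [hinv]; module
  have hLoew : Matrix.Loewner ((1 - ω) • P₁⁻¹ + ω • P₂⁻¹) (P₁⁻¹ + P₂⁻¹ - PΓ⁻¹) := by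
    rw [Matrix.Loewner, hdiff]; exact hterm
  have hpd : (P₁⁻¹ + P₂⁻¹ - PΓ⁻¹).PosDef := by
    rw [hdiff']
    exact (convex_posDef hA hB hω0' hω0 (by ring)).add_posSemidef hterm
  exact ⟨hLoew, hpd, hpd.inv⟩
end

section
/- Let P₁ and P₂ be n×n real symmetric positive definite matrices with P₁ ⪯ γ̄·I and P₂ ⪯ γ̄·I for some γ̄ > 0, let ω ∈ [0,1], and set P_Γ = ω·P₁ + (1 − ω)·P₂. Then (P₁)⁻¹ + (P₂)⁻¹ − (P_Γ)⁻¹ ⪰ (1/γ̄)·I, and consequently the pairwise ICI fused covariance P̂ = ((P₁)⁻¹ + (P₂)⁻¹ − (P_Γ)⁻¹)⁻¹ satisfies P̂ ⪯ γ̄·I. (Theorem 1, diffusion-update bound, in the case of fusion of two local estimates.) -/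
section Aux

open Matrix

variable {n : ℕ}

private lemma psd_smul_s8 {c : ℝ} (hc : 0 ≤ c) {m : Type*} [Fintype m] {M : Matrix m m ℝ}
    (hM : M.PosSemidef) : (c • M).PosSemidef := by
  refine ⟨?_, fun x => ?_⟩
  · show (c • M)ᴴ = c • M
    rw [conjTranspose_smul, hM.1.eq, star_trivial]
  · exact (hM.smul hc).2 x

private lemma pd_smul {c : ℝ} (hc : 0 < c) {M : Matrix (Fin n) (Fin n) ℝ}
    (hM : M.PosDef) : (c • M).PosDef := by
  refine ⟨?_, fun x hx => ?_⟩
  · show (c • M)ᴴ = c • M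
    rw [conjTranspose_smul, hM.1.eq, star_trivial]
  · exact (hM.smul hc).2 hx

private lemma pd_smul_one {c : ℝ} (hc : 0 < c) :
    ((c • (1 : Matrix (Fin n) (Fin n) ℝ))).PosDef :=
  pd_smul hc Matrix.PosDef.one

private lemma inv_smul_one {c : ℝ} (hc : c ≠ 0) :
    ((c • (1 : Matrix (Fin n) (Fin n) ℝ)))⁻¹ = c⁻¹ • 1 := by
  apply Matrix.inv_eq_right_inv
  rw [smul_mul_smul_comm, one_mul, mul_inv_cancel₀ hc, one_smul]

/-- Inverse is antitone for the Loewner order. -/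
private lemma inv_antitone {A B : Matrix (Fin n) (Fin n) ℝ}
    (hA : A.PosDef) (hB : B.PosDef) (h : (B - A).PosSemidef) :
    (A⁻¹ - B⁻¹).PosSemidef := by
  have := hA.isUnit.invertible
  have := hB.isUnit.invertible
  have hAinv : (A⁻¹).PosDef := hA.inv
  have := hAinv.isUnit.invertible
  have hdet : IsUnit A.det := (Matrix.isUnit_iff_isUnit_det A).mp hA.isUnit
  have h1 : (Matrix.fromBlocks B (1 : Matrix (Fin n) (Fin n) ℝ)
      (1 : Matrix (Fin n) (Fin n) ℝ)ᴴ A⁻¹).PosSemidef := by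
    rw [Matrix.PosDef.fromBlocks₂₂ _ _ hAinv]
    simpa [Matrix.nonsing_inv_nonsing_inv A hdet] using h
  have h2 := (Matrix.PosDef.fromBlocks₁₁ _ _ hB).mp h1
  simpa using h2

/-- Operator convexity of the inverse, via Schur complements. -/
private lemma inv_convex {A B : Matrix (Fin n) (Fin n) ℝ}
    (hA : A.PosDef) (hB : B.PosDef) {ω : ℝ} (hω0 : 0 ≤ ω) (hω1 : ω ≤ 1)
    (hC : (ω • A + (1 - ω) • B).PosDef) :
    (ω • A⁻¹ + (1 - ω) • B⁻¹ - (ω • A + (1 - ω) • B)⁻¹).PosSemidef := by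
  have := hA.isUnit.invertible
  have := hB.isUnit.invertible
  have := hC.isUnit.invertible
  have hMA : (Matrix.fromBlocks A (1 : Matrix (Fin n) (Fin n) ℝ)
      (1 : Matrix (Fin n) (Fin n) ℝ)ᴴ A⁻¹).PosSemidef := by
    rw [Matrix.PosDef.fromBlocks₁₁ _ _ hA]
    simp only [Matrix.conjTranspose_one, Matrix.one_mul, Matrix.mul_one, sub_self]
    exact Matrix.PosSemidef.zero
  have hMB : (Matrix.fromBlocks B (1 : Matrix (Fin n) (Fin n) ℝ)
      (1 : Matrix (Fin n) (Fin n) ℝ)ᴴ B⁻¹).PosSemidef := by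
    rw [Matrix.PosDef.fromBlocks₁₁ _ _ hB]
    simp only [Matrix.conjTranspose_one, Matrix.one_mul, Matrix.mul_one, sub_self]
    exact Matrix.PosSemidef.zero
  have hs := (psd_smul_s8 hω0 hMA).add (psd_smul_s8 (by linarith : (0:ℝ) ≤ 1 - ω) hMB)
  rw [Matrix.fromBlocks_smul, Matrix.fromBlocks_smul, Matrix.fromBlocks_add] at hs
  have e1 : ω • (1 : Matrix (Fin n) (Fin n) ℝ) + (1 - ω) • 1 = 1 := by
    rw [← add_smul]; simp
  have e2 : ω • (1 : Matrix (Fin n) (Fin n) ℝ)ᴴ + (1 - ω) • (1 : Matrix (Fin n) (Fin n) ℝ)ᴴ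
      = (1 : Matrix (Fin n) (Fin n) ℝ)ᴴ := by
    rw [← add_smul]; simp
  rw [e1, e2] at hs
  have h2 := (Matrix.PosDef.fromBlocks₁₁ _ _ hC).mp hs
  simpa using h2

end Aux

/-- **Theorem 1, pairwise diffusion-update bound.** If `P₁ ⪯ γ̄·I` and `P₂ ⪯ γ̄·I` are
symmetric positive definite and `P_Γ = ω P₁ + (1−ω) P₂` with `ω ∈ [0,1]`, then
`(P₁)⁻¹ + (P₂)⁻¹ − (P_Γ)⁻¹ ⪰ (1/γ̄)·I`, and the pairwise ICI fused covariance
`P̂ = ((P₁)⁻¹ + (P₂)⁻¹ − (P_Γ)⁻¹)⁻¹` satisfies `P̂ ⪯ γ̄·I`. -/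
theorem pairwise_ici_fused_bound
    {n : ℕ} (P₁ P₂ : Matrix (Fin n) (Fin n) ℝ)
    (hP₁ : P₁.PosDef) (hP₂ : P₂.PosDef)
    (γbar : ℝ) (hγ : 0 < γbar)
    (hP₁up : Matrix.Loewner P₁ (γbar • (1 : Matrix (Fin n) (Fin n) ℝ)))
    (hP₂up : Matrix.Loewner P₂ (γbar • (1 : Matrix (Fin n) (Fin n) ℝ)))
    (ω : ℝ) (hω0 : 0 ≤ ω) (hω1 : ω ≤ 1)
    (PΓ : Matrix (Fin n) (Fin n) ℝ) (hPΓ : PΓ = ω • P₁ + (1 - ω) • P₂) :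
    Matrix.Loewner ((1 / γbar) • (1 : Matrix (Fin n) (Fin n) ℝ)) (P₁⁻¹ + P₂⁻¹ - PΓ⁻¹) ∧
    Matrix.Loewner (P₁⁻¹ + P₂⁻¹ - PΓ⁻¹)⁻¹ (γbar • (1 : Matrix (Fin n) (Fin n) ℝ)) := by
  have hγI : ((γbar • (1 : Matrix (Fin n) (Fin n) ℝ))).PosDef := pd_smul_one hγ
  -- PΓ is positive definite
  have hPΓpd : PΓ.PosDef := by
    rcases eq_or_lt_of_le hω1 with rfl | h1
    · rw [hPΓ]; simpa using hP₁
    · rw [hPΓ]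
      exact Matrix.PosDef.posSemidef_add (psd_smul_s8 hω0 hP₁.posSemidef) (pd_smul (by linarith) hP₂)
  -- inverse lower bounds
  have h1inv : (P₁⁻¹ - (1 / γbar) • (1 : Matrix (Fin n) (Fin n) ℝ)).PosSemidef := by
    rw [one_div]
    have := inv_antitone hP₁ hγI hP₁up
    rwa [inv_smul_one hγ.ne'] at this
  have h2inv : (P₂⁻¹ - (1 / γbar) • (1 : Matrix (Fin n) (Fin n) ℝ)).PosSemidef := by
    rw [one_div]
    have := inv_antitone hP₂ hγI hP₂up
    rwa [inv_smul_one hγ.ne'] at this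
  -- convexity of inverse
  have hconv : (ω • P₁⁻¹ + (1 - ω) • P₂⁻¹ - PΓ⁻¹).PosSemidef := by
    rw [hPΓ]; exact inv_convex hP₁ hP₂ hω0 hω1 (hPΓ ▸ hPΓpd)
  -- first part
  have hfirst : Matrix.Loewner ((1 / γbar) • (1 : Matrix (Fin n) (Fin n) ℝ))
      (P₁⁻¹ + P₂⁻¹ - PΓ⁻¹) := by
    unfold Matrix.Loewner
    have key : P₁⁻¹ + P₂⁻¹ - PΓ⁻¹ - (1 / γbar) • (1 : Matrix (Fin n) (Fin n) ℝ) =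
        (ω • P₁⁻¹ + (1 - ω) • P₂⁻¹ - PΓ⁻¹) +
        ((1 - ω) • (P₁⁻¹ - (1 / γbar) • (1 : Matrix (Fin n) (Fin n) ℝ)) +
         ω • (P₂⁻¹ - (1 / γbar) • (1 : Matrix (Fin n) (Fin n) ℝ))) := by
      module
    rw [key]
    exact hconv.add ((psd_smul_s8 (by linarith : (0:ℝ) ≤ 1 - ω) h1inv).add (psd_smul_s8 hω0 h2inv))
  refine ⟨hfirst, ?_⟩
  -- second part
  have hγinvI : (((1 / γbar) • (1 : Matrix (Fin n) (Fin n) ℝ))).PosDef :=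
    pd_smul_one (by positivity)
  have hSpd : (P₁⁻¹ + P₂⁻¹ - PΓ⁻¹).PosDef := by
    have heq : P₁⁻¹ + P₂⁻¹ - PΓ⁻¹ = ((1 / γbar) • (1 : Matrix (Fin n) (Fin n) ℝ)) +
        (P₁⁻¹ + P₂⁻¹ - PΓ⁻¹ - (1 / γbar) • (1 : Matrix (Fin n) (Fin n) ℝ)) := by abel
    rw [heq]
    exact hγinvI.add_posSemidef hfirst
  have hfin := inv_antitone hγinvI hSpd hfirst
  unfold Matrix.Loewner
  rw [inv_smul_one (by positivity : (1 / γbar) ≠ 0)] at hfin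
  simp only [one_div, inv_inv] at hfin
  exact hfin
end

section
/- Let m ≥ 2, let P₁, …, P_m be n×n real symmetric positive definite matrices with Pⱼ ⪯ γ̄·I for all j and some γ̄ > 0, and let ω₁, …, ω_m be weights with 0 ≤ ωⱼ ≤ 1/(m − 1) for every j and Σⱼ ωⱼ = 1. Set P_Γ = Σⱼ ωⱼ Pⱼ. Then the multi-sensor inverse-covariance-intersection information matrix satisfies Σⱼ (Pⱼ)⁻¹ − (m − 1)·(P_Γ)⁻¹ ⪰ (1/γ̄)·I; in particular it is symmetric positive definite, and the fused covariance P̂ = (Σⱼ (Pⱼ)⁻¹ − (m − 1)·(P_Γ)⁻¹)⁻¹ satisfies P̂ ⪯ γ̄·I. (Theorem 1, diffusion-update bound for the multi-fusion ICI rule, with the weight restriction ωⱼ ≤ 1/(m−1) making the bound precise.) -/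
open Matrix BigOperators

section helpers
variable {n : ℕ}

lemma dot_symm {A : Matrix (Fin n) (Fin n) ℝ} (hA : A.IsHermitian) (x y : Fin n → ℝ) :
    x ⬝ᵥ (A *ᵥ y) = y ⬝ᵥ (A *ᵥ x) := by
  have hAt : Aᵀ = A := by
    simpa [Matrix.conjTranspose_eq_transpose_of_trivial] using hA.eq
  rw [Matrix.dotProduct_mulVec, ← Matrix.mulVec_transpose, hAt, dotProduct_comm]

lemma key {A : Matrix (Fin n) (Fin n) ℝ} (hA : A.PosDef) (x y : Fin n → ℝ) :
    2 * (x ⬝ᵥ y) - y ⬝ᵥ (A *ᵥ y) ≤ x ⬝ᵥ (A⁻¹ *ᵥ x) := by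
  set w : Fin n → ℝ := A⁻¹ *ᵥ x with hw
  have hdet : IsUnit A.det := isUnit_iff_ne_zero.mpr hA.det_pos.ne'
  have hAw : A *ᵥ w = x := by
    rw [hw, Matrix.mulVec_mulVec, Matrix.mul_nonsing_inv _ hdet, Matrix.one_mulVec]
  have h0 := hA.posSemidef.dotProduct_mulVec_nonneg (y - w)
  simp only [star_trivial] at h0
  rw [Matrix.mulVec_sub, dotProduct_sub, sub_dotProduct,
    sub_dotProduct, hAw] at h0
  have h1 : w ⬝ᵥ (A *ᵥ y) = y ⬝ᵥ x := by rw [dot_symm hA.isHermitian, hAw]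
  have h2 : y ⬝ᵥ x = x ⬝ᵥ y := dotProduct_comm _ _
  have h3 : w ⬝ᵥ x = x ⬝ᵥ w := dotProduct_comm _ _
  rw [h1] at h0
  linarith [h0]

lemma sum_smul_mulVec {m : ℕ} (ω : Fin m → ℝ) (P : Fin m → Matrix (Fin n) (Fin n) ℝ)
    (y : Fin n → ℝ) : (∑ j, ω j • P j) *ᵥ y = ∑ j, ω j • (P j *ᵥ y) := by
  ext i
  simp [Matrix.mulVec, dotProduct, Matrix.sum_apply, Finset.sum_apply,
    Finset.sum_mul, Finset.mul_sum]
  rw [Finset.sum_comm]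
  simp [mul_assoc]

lemma sum_mulVec' {m : ℕ} (P : Fin m → Matrix (Fin n) (Fin n) ℝ)
    (y : Fin n → ℝ) : (∑ j, P j) *ᵥ y = ∑ j, (P j *ᵥ y) := by
  ext i
  simp [Matrix.mulVec, dotProduct, Matrix.sum_apply, Finset.sum_apply,
    Finset.sum_mul]
  rw [Finset.sum_comm]

lemma dotProduct_sum'' {m : ℕ} (x : Fin n → ℝ) (f : Fin m → (Fin n → ℝ)) :
    x ⬝ᵥ (∑ j, f j) = ∑ j, x ⬝ᵥ f j := by
  simp only [dotProduct, Finset.sum_apply, Finset.mul_sum]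
  rw [Finset.sum_comm]

end helpers

/-- **Theorem 1, multi-fusion diffusion-update bound.** For `m ≥ 2` symmetric positive
definite matrices `Pⱼ ⪯ γ̄·I` and weights `0 ≤ ωⱼ ≤ 1/(m−1)` with `Σⱼ ωⱼ = 1`, the
multi-sensor ICI information matrix `Σⱼ (Pⱼ)⁻¹ − (m−1)(P_Γ)⁻¹` with `P_Γ = Σⱼ ωⱼ Pⱼ`
satisfies `⪰ (1/γ̄)·I`, is symmetric positive definite, and the fused covariance
`P̂ = (Σⱼ (Pⱼ)⁻¹ − (m−1)(P_Γ)⁻¹)⁻¹` satisfies `P̂ ⪯ γ̄·I`. -/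
theorem multi_ici_fused_bound
    {n m : ℕ} (hm : 2 ≤ m)
    (P : Fin m → Matrix (Fin n) (Fin n) ℝ) (hP : ∀ j, (P j).PosDef)
    (γbar : ℝ) (hγ : 0 < γbar)
    (hPup : ∀ j, Matrix.Loewner (P j) (γbar • (1 : Matrix (Fin n) (Fin n) ℝ)))
    (ω : Fin m → ℝ) (hω0 : ∀ j, 0 ≤ ω j) (hω1 : ∀ j, ω j ≤ 1 / ((m : ℝ) - 1))
    (hωsum : ∑ j, ω j = 1)
    (PΓ : Matrix (Fin n) (Fin n) ℝ) (hPΓ : PΓ = ∑ j, ω j • P j) :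
    Matrix.Loewner ((1 / γbar) • (1 : Matrix (Fin n) (Fin n) ℝ))
      (∑ j, (P j)⁻¹ - ((m : ℝ) - 1) • PΓ⁻¹) ∧
    (∑ j, (P j)⁻¹ - ((m : ℝ) - 1) • PΓ⁻¹).PosDef ∧
    Matrix.Loewner (∑ j, (P j)⁻¹ - ((m : ℝ) - 1) • PΓ⁻¹)⁻¹
      (γbar • (1 : Matrix (Fin n) (Fin n) ℝ)) := by
  have hm1 : (1:ℝ) ≤ (m:ℝ) - 1 := by
    have h2 : (2:ℝ) ≤ (m:ℝ) := by exact_mod_cast hm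
    linarith
  have hm0 : (0:ℝ) < (m:ℝ) - 1 := by linarith
  have hcoef : ∀ j, 0 ≤ 1 - ((m:ℝ) - 1) * ω j := by
    intro j
    have h : ((m:ℝ) - 1) * ω j ≤ 1 := by
      rw [mul_comm]; exact (le_div_iff₀ hm0).mp (hω1 j)
    linarith
  -- upper quadratic bound from hPup
  have hPQ : ∀ j (x : Fin n → ℝ), x ⬝ᵥ (P j *ᵥ x) ≤ γbar * (x ⬝ᵥ x) := by
    intro j x
    have h := (hPup j).dotProduct_mulVec_nonneg x
    simp only [star_trivial, Matrix.sub_mulVec, Matrix.smul_mulVec, Matrix.one_mulVec,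
      dotProduct_sub, dotProduct_smul, smul_eq_mul] at h
    linarith
  -- lower bound on inverse quadratic forms
  have hinvlow : ∀ j (x : Fin n → ℝ), (1/γbar) * (x ⬝ᵥ x) ≤ x ⬝ᵥ ((P j)⁻¹ *ᵥ x) := by
    intro j x
    have h := key (hP j) x ((1/γbar) • x)
    simp only [dotProduct_smul, smul_dotProduct, Matrix.mulVec_smul,
      smul_eq_mul] at h
    have hg : (1/γbar) * γbar = 1 := by field_simp
    have hq := hPQ j x
    have h2 : (1/γbar) * ((1/γbar) * (x ⬝ᵥ (P j *ᵥ x))) ≤ (1/γbar) * (x ⬝ᵥ x) := by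
      have hpos : (0:ℝ) ≤ 1/γbar := by positivity
      have := mul_le_mul_of_nonneg_left hq hpos
      calc (1/γbar) * ((1/γbar) * (x ⬝ᵥ (P j *ᵥ x)))
          ≤ (1/γbar) * ((1/γbar) * (γbar * (x ⬝ᵥ x))) := by nlinarith [hpos]
        _ = (1/γbar) * (x ⬝ᵥ x) := by field_simp
    linarith
  -- PΓ is positive definite
  have hPΓpd : PΓ.PosDef := by
    refine Matrix.PosDef.of_dotProduct_mulVec_pos ?_ ?_
    · rw [hPΓ]
      show (∑ j, ω j • P j)ᴴ = _
      rw [Matrix.conjTranspose_sum]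
      congr 1; funext j
      rw [Matrix.conjTranspose_smul, (hP j).isHermitian.eq, star_trivial]
    · intro x hx
      simp only [star_trivial, hPΓ, sum_smul_mulVec, dotProduct_sum'',
        dotProduct_smul, smul_eq_mul]
      have hex : ∃ j ∈ Finset.univ, 0 < ω j * (x ⬝ᵥ (P j *ᵥ x)) := by
        by_contra hcon
        push_neg at hcon
        have hle : ∀ j ∈ (Finset.univ : Finset (Fin m)), ω j ≤ 0 := by
          intro j _
          by_contra hj
          push_neg at hj
          exact absurd (mul_pos hj ((hP j).dotProduct_mulVec_pos hx)) (not_lt.mpr (by simpa [star_trivial] using hcon j (Finset.mem_univ j)))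
        have : ∑ j, ω j ≤ 0 := Finset.sum_nonpos hle
        rw [hωsum] at this; linarith
      refine Finset.sum_pos' (fun j _ => ?_) hex
      exact mul_nonneg (hω0 j) (le_of_lt ((hP j).dotProduct_mulVec_pos hx))
  have hdetΓ : IsUnit PΓ.det := isUnit_iff_ne_zero.mpr hPΓpd.det_pos.ne'
  -- convexity of inverse at the quadratic-form level
  have hconv : ∀ x : Fin n → ℝ,
      x ⬝ᵥ (PΓ⁻¹ *ᵥ x) ≤ ∑ j, ω j * (x ⬝ᵥ ((P j)⁻¹ *ᵥ x)) := by
    intro x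
    set y : Fin n → ℝ := PΓ⁻¹ *ᵥ x with hy
    have hΓy : PΓ *ᵥ y = x := by
      rw [hy, Matrix.mulVec_mulVec, Matrix.mul_nonsing_inv _ hdetΓ, Matrix.one_mulVec]
    have hxy : x ⬝ᵥ (PΓ⁻¹ *ᵥ x) = 2 * (x ⬝ᵥ y) - y ⬝ᵥ (PΓ *ᵥ y) := by
      rw [hΓy, ← hy, dotProduct_comm y x]; ring
    have hexp : y ⬝ᵥ (PΓ *ᵥ y) = ∑ j, ω j * (y ⬝ᵥ (P j *ᵥ y)) := by
      rw [hPΓ, sum_smul_mulVec, dotProduct_sum'']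
      simp [dotProduct_smul]
    rw [hxy, hexp]
    have h2 : 2 * (x ⬝ᵥ y) = ∑ j, ω j * (2 * (x ⬝ᵥ y)) := by
      rw [← Finset.sum_mul, hωsum, one_mul]
    rw [h2, ← Finset.sum_sub_distrib]
    refine Finset.sum_le_sum fun j _ => ?_
    rw [← mul_sub]
    exact mul_le_mul_of_nonneg_left (key (hP j) x y) (hω0 j)
  -- the information matrix and its quadratic form
  set S : Matrix (Fin n) (Fin n) ℝ := ∑ j, (P j)⁻¹ - ((m : ℝ) - 1) • PΓ⁻¹ with hS
  have hSq : ∀ x : Fin n → ℝ,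
      x ⬝ᵥ (S *ᵥ x) = (∑ j, x ⬝ᵥ ((P j)⁻¹ *ᵥ x)) - ((m:ℝ) - 1) * (x ⬝ᵥ (PΓ⁻¹ *ᵥ x)) := by
    intro x
    rw [hS, Matrix.sub_mulVec, dotProduct_sub, sum_mulVec', dotProduct_sum'',
      Matrix.smul_mulVec, dotProduct_smul, smul_eq_mul]
  -- main quadratic lower bound
  have hmain : ∀ x : Fin n → ℝ, (1/γbar) * (x ⬝ᵥ x) ≤ x ⬝ᵥ (S *ᵥ x) := by
    intro x
    rw [hSq x]
    have hA : ((m:ℝ) - 1) * (x ⬝ᵥ (PΓ⁻¹ *ᵥ x))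
        ≤ ((m:ℝ) - 1) * ∑ j, ω j * (x ⬝ᵥ ((P j)⁻¹ *ᵥ x)) :=
      mul_le_mul_of_nonneg_left (hconv x) (le_of_lt hm0)
    have hB : (1/γbar) * (x ⬝ᵥ x)
        ≤ ∑ j, (1 - ((m:ℝ) - 1) * ω j) * (x ⬝ᵥ ((P j)⁻¹ *ᵥ x)) := by
      have hc : ∑ j, (1 - ((m:ℝ) - 1) * ω j) * ((1/γbar) * (x ⬝ᵥ x))
          = (1/γbar) * (x ⬝ᵥ x) := by
        rw [← Finset.sum_mul]
        have : ∑ j, (1 - ((m:ℝ) - 1) * ω j) = 1 := by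
          rw [Finset.sum_sub_distrib, Finset.sum_const, ← Finset.mul_sum, hωsum,
            Finset.card_univ, Fintype.card_fin]
          ring
        rw [this, one_mul]
      rw [← hc]
      refine Finset.sum_le_sum fun j _ => ?_
      exact mul_le_mul_of_nonneg_left (hinvlow j x) (hcoef j)
    have hsplit : ∑ j, (1 - ((m:ℝ) - 1) * ω j) * (x ⬝ᵥ ((P j)⁻¹ *ᵥ x))
        = (∑ j, x ⬝ᵥ ((P j)⁻¹ *ᵥ x))
          - ((m:ℝ) - 1) * ∑ j, ω j * (x ⬝ᵥ ((P j)⁻¹ *ᵥ x)) := by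
      rw [Finset.mul_sum, ← Finset.sum_sub_distrib]
      congr 1; funext j; ring
    rw [hsplit] at hB
    linarith
  -- Hermitian bookkeeping
  have hermS : S.IsHermitian := by
    have h1 : (∑ j, (P j)⁻¹).IsHermitian := by
      show (∑ j, (P j)⁻¹)ᴴ = _
      rw [Matrix.conjTranspose_sum]
      congr 1; funext j
      exact ((hP j).inv).isHermitian.eq
    have h2 : (((m:ℝ) - 1) • PΓ⁻¹).IsHermitian := by
      show (((m:ℝ) - 1) • PΓ⁻¹)ᴴ = _
      rw [Matrix.conjTranspose_smul, hPΓpd.inv.isHermitian.eq, star_trivial]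
    exact h1.sub h2
  -- conclusion part 1
  have part1 : Matrix.Loewner ((1 / γbar) • (1 : Matrix (Fin n) (Fin n) ℝ)) S := by
    refine Matrix.PosSemidef.of_dotProduct_mulVec_nonneg ?_ ?_
    · show (S - (1/γbar) • 1)ᴴ = _
      rw [Matrix.conjTranspose_sub, hermS.eq, Matrix.conjTranspose_smul,
        Matrix.conjTranspose_one, star_trivial]
    · intro x
      simp only [star_trivial, Matrix.sub_mulVec, Matrix.smul_mulVec, Matrix.one_mulVec,
        dotProduct_sub, dotProduct_smul, smul_eq_mul]
      linarith [hmain x]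
  -- part 2 : S is positive definite
  have part2 : S.PosDef := by
    refine Matrix.PosDef.of_dotProduct_mulVec_pos hermS fun x hx => ?_
    have hxx : 0 < x ⬝ᵥ x := by
      simpa [star_trivial] using (Matrix.dotProduct_star_self_pos_iff (v := x)).mpr hx
    have := hmain x
    have : 0 < (1/γbar) * (x ⬝ᵥ x) := by positivity
    simp only [star_trivial]
    linarith [hmain x]
  -- part 3 : inverse upper bound
  have hdetS : IsUnit S.det := isUnit_iff_ne_zero.mpr part2.det_pos.ne'
  have part3 : Matrix.Loewner S⁻¹ (γbar • (1 : Matrix (Fin n) (Fin n) ℝ)) := by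
    refine Matrix.PosSemidef.of_dotProduct_mulVec_nonneg ?_ ?_
    · show (γbar • 1 - S⁻¹)ᴴ = _
      rw [Matrix.conjTranspose_sub, Matrix.conjTranspose_smul, Matrix.conjTranspose_one,
        part2.inv.isHermitian.eq, star_trivial]
    · intro x
      set y : Fin n → ℝ := S⁻¹ *ᵥ x with hy
      have hSy : S *ᵥ y = x := by
        rw [hy, Matrix.mulVec_mulVec, Matrix.mul_nonsing_inv _ hdetS, Matrix.one_mulVec]
      have hq : x ⬝ᵥ (S⁻¹ *ᵥ x) = x ⬝ᵥ y := by rw [hy]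
      have hlow : (1/γbar) * (y ⬝ᵥ y) ≤ x ⬝ᵥ y := by
        have := hmain y
        rw [hSy] at this
        rw [dotProduct_comm x y]
        exact this
      have hd : 0 ≤ (y - γbar • x) ⬝ᵥ (y - γbar • x) := by
        simpa [star_trivial] using dotProduct_star_self_nonneg (y - γbar • x)
      have hdex : (y - γbar • x) ⬝ᵥ (y - γbar • x)
          = y ⬝ᵥ y - 2 * γbar * (x ⬝ᵥ y) + γbar^2 * (x ⬝ᵥ x) := by
        rw [sub_dotProduct, dotProduct_sub, dotProduct_sub,
          smul_dotProduct, smul_dotProduct, dotProduct_smul,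
          dotProduct_smul, smul_eq_mul, smul_eq_mul, smul_eq_mul,
          dotProduct_comm y x]
        simp only [smul_eq_mul]
        ring
      rw [hdex] at hd
      simp only [star_trivial, Matrix.sub_mulVec, Matrix.smul_mulVec, Matrix.one_mulVec,
        dotProduct_sub, dotProduct_smul, smul_eq_mul, hq]
      -- from hlow : y⬝y ≤ γbar * (x⬝y)
      have hyy : y ⬝ᵥ y ≤ γbar * (x ⬝ᵥ y) := by
        have := mul_le_mul_of_nonneg_left hlow (le_of_lt hγ)
        have hg : γbar * ((1/γbar) * (y ⬝ᵥ y)) = y ⬝ᵥ y := by field_simp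
        linarith [this, hg ▸ this]
      nlinarith [hd, hyy, hγ]
  exact ⟨part1, part2, part3⟩
end
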